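/- The derivative of Δ_u vanishes exactly at the three cusp parameters: for all t ∈ ℝ, Δ_u'(t) = (0,0) if and only if t = −u/3 + 2πk/3 for some integer k. -/

import Mathlib

open Real

noncomputable def steinerHat (a b u t : ℝ) : ℝ × ℝ :=
  (((a ^ 2 - b ^ 2) * (1 + cos (t + u)) * cos t - a ^ 2 * cos u) / a,
   ((a ^ 2 - b ^ 2) * cos t * sin (t + u) - (a ^ 2 - b ^ 2) * sin t - a ^ 2 * sin u) / b)

lemma hd_cos (u t : ℝ) : HasDerivAt (fun s : ℝ => cos (s + u)) (-sin (t + u)) t := by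
  exact ((Real.hasDerivAt_cos (t + u)).comp t ((hasDerivAt_id t).add_const u)).congr_deriv (mul_one _)

lemma hd_sin (u t : ℝ) : HasDerivAt (fun s : ℝ => sin (s + u)) (cos (t + u)) t := by
  exact ((Real.hasDerivAt_sin (t + u)).comp t ((hasDerivAt_id t).add_const u)).congr_deriv (mul_one _)

lemma deriv_fst (a b u t : ℝ) :
    deriv (fun s => (steinerHat a b u s).1) t
      = -((a ^ 2 - b ^ 2) * (sin (2 * t + u) + sin t)) / a := by
  have h : HasDerivAt (fun s => (steinerHat a b u s).1)
      (-((a ^ 2 - b ^ 2) * (sin (2 * t + u) + sin t)) / a) t := by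
    have h1 : HasDerivAt (fun s : ℝ => (a ^ 2 - b ^ 2) * (1 + cos (s + u)))
        ((a ^ 2 - b ^ 2) * (-sin (t + u))) t :=
      (((hasDerivAt_const t (1:ℝ)).add (hd_cos u t)).const_mul _).congr_deriv (by ring)
    have h2 := (h1.mul (Real.hasDerivAt_cos t)).sub_const (a ^ 2 * Real.cos u)
    have h3 := h2.div_const a
    refine h3.congr_deriv (Eq.symm ?_)
    have : sin (2 * t + u) = sin ((t + u) + t) := by ring_nf
    rw [this, Real.sin_add]
    ring
  exact h.deriv

lemma deriv_snd (a b u t : ℝ) :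
    deriv (fun s => (steinerHat a b u s).2) t
      = ((a ^ 2 - b ^ 2) * (cos (2 * t + u) - cos t)) / b := by
  have h : HasDerivAt (fun s => (steinerHat a b u s).2)
      (((a ^ 2 - b ^ 2) * (cos (2 * t + u) - cos t)) / b) t := by
    have hcos : HasDerivAt (fun s : ℝ => (a ^ 2 - b ^ 2) * cos s) (-((a ^ 2 - b ^ 2) * sin t)) t := by
      simpa using (Real.hasDerivAt_cos t).const_mul ((a:ℝ) ^ 2 - b ^ 2)
    have h1 := hcos.mul (hd_sin u t)
    have h2 : HasDerivAt (fun s : ℝ => (a ^ 2 - b ^ 2) * sin s) ((a ^ 2 - b ^ 2) * cos t) t :=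
      ((Real.hasDerivAt_sin t).const_mul _).congr_deriv (by ring)
    have h3 := ((h1.sub h2).sub_const (a ^ 2 * Real.sin u)).div_const b
    refine h3.congr_deriv (Eq.symm ?_)
    have : cos (2 * t + u) = cos ((t + u) + t) := by ring_nf
    rw [this, Real.cos_add]
    ring
  exact h.deriv

lemma key (u t : ℝ) :
    (sin (2 * t + u) + sin t = 0 ∧ cos (2 * t + u) - cos t = 0)
      ↔ ∃ k : ℤ, t = -u / 3 + 2 * π * (k : ℝ) / 3 := by
  constructor
  · rintro ⟨h1, h2⟩
    have hs : sin (2 * t + u) = -sin t := by linarith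
    have hc : cos (2 * t + u) = cos t := by linarith
    have hone : cos (3 * t + u) = 1 := by
      have : (3 : ℝ) * t + u = (2 * t + u) + t := by ring
      rw [this, Real.cos_add, hs, hc]
      nlinarith [Real.sin_sq_add_cos_sq t]
    rw [Real.cos_eq_one_iff] at hone
    obtain ⟨n, hn⟩ := hone
    exact ⟨n, by linarith⟩
  · rintro ⟨k, rfl⟩
    have h2t : 2 * (-u / 3 + 2 * π * (k : ℝ) / 3) + u = (k : ℝ) * (2 * π) - (-u / 3 + 2 * π * (k : ℝ) / 3) := by
      ring
    rw [h2t, Real.sin_int_mul_two_pi_sub, Real.cos_int_mul_two_pi_sub]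
    constructor <;> ring

/-- the derivative of `Δ_u` vanishes exactly at the three cusp parameters
`t = −u/3 + 2πk/3`, `k ∈ ℤ`. -/
theorem stmt4 (a b u : ℝ) (hb : 0 < b) (hab : b < a) :
    ∀ t : ℝ,
      (deriv (fun s => (steinerHat a b u s).1) t = 0 ∧
       deriv (fun s => (steinerHat a b u s).2) t = 0)
      ↔ ∃ k : ℤ, t = -u / 3 + 2 * π * (k : ℝ) / 3 := by
  intro t
  rw [deriv_fst, deriv_snd]
  have ha : (0:ℝ) < a := lt_trans hb hab
  have hc : (0:ℝ) < a ^ 2 - b ^ 2 := by nlinarith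
  rw [← key u t]
  constructor
  · rintro ⟨h1, h2⟩
    constructor
    · have := (div_eq_zero_iff.mp h1).resolve_right ha.ne'
      have := neg_eq_zero.mp this
      rcases mul_eq_zero.mp this with h | h
      · exact absurd h hc.ne'
      · exact h
    · have := (div_eq_zero_iff.mp h2).resolve_right hb.ne'
      rcases mul_eq_zero.mp this with h | h
      · exact absurd h hc.ne'
      · exact h
  · rintro ⟨h1, h2⟩
    rw [h1, h2]
    simp
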